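/- For i = 1,2 let two Mauldin–Williams graphs over the same underlying graph G = (V,E,r,s) coincide with their invariant lists, with invariant sets K¹, K², algebras A_i = C(Kⁱ, ℂ) and bimodules X_i, and let V : X₂ → X₁ be a correspondence isomorphism over a homeomorphism f : K¹ → K². For g ∈ E let δ_g ∈ X₂ be the function δ_g(h,y) = 1 if h = g and 0 otherwise, and define w_{eg} : K¹ → ℂ by w_{eg}(x) = V(δ_g)(e,x) if x ∈ K¹_{r(e)} and w_{eg}(x) = 0 otherwise. Then for every x ∈ K¹ and all e, g ∈ E with f(x) ∈ K²_{r(e)} and f(x) ∈ K²_{r(g)}: Σ_{h∈E, x∈K¹_{r(h)}} conj(w_{hg}(x))·w_{he}(x) equals 1 if e = g and equals 0 if e ≠ g. Consequently, for every x ∈ K¹ there is an injective map σ_x from {e ∈ E : f(x) ∈ K²_{r(e)}} into {h ∈ E : x ∈ K¹_{r(h)}} such that w_{σ_x(e), e}(x) ≠ 0 for all e in its domain. -/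

import Mathlib

/-- A finite directed graph with surjective range and source maps
(no sources and no sinks). -/
structure DirGraph (V E : Type*) where
  r : E → V
  s : E → V
  r_surj : Function.Surjective r
  s_surj : Function.Surjective s

/-- A Mauldin–Williams graph over the directed graph `G`.  The compact metric
spaces `T v` are realized as pairwise disjoint nonempty compact subsets of an
ambient metric space `X` (modelling their disjoint union), and for each edge
`e` the map `φ e : T (r e) → T (s e)` satisfies
`c₁ * dist x y ≤ dist (φ e x) (φ e y) ≤ c * dist x y` with `0 < c₁ ≤ c < 1`. -/
structure MWGraph {V E : Type*} (G : DirGraph V E) (X : Type*) [MetricSpace X] where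
  T : V → Set X
  φ : E → X → X
  c₁ : ℝ
  c : ℝ
  c₁_pos : 0 < c₁
  c₁_le_c : c₁ ≤ c
  c_lt_one : c < 1
  T_compact : ∀ v, IsCompact (T v)
  T_nonempty : ∀ v, (T v).Nonempty
  T_disjoint : ∀ v w, v ≠ w → Disjoint (T v) (T w)
  maps_to : ∀ e, Set.MapsTo (φ e) (T (G.r e)) (T (G.s e))
  lower : ∀ e, ∀ x ∈ T (G.r e), ∀ y ∈ T (G.r e), c₁ * dist x y ≤ dist (φ e x) (φ e y)
  upper : ∀ e, ∀ x ∈ T (G.r e), ∀ y ∈ T (G.r e), dist (φ e x) (φ e y) ≤ c * dist x y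

namespace MWGraph

variable {V E : Type*} {G : DirGraph V E} {X : Type*} [MetricSpace X]

/-- `K : V → Set X` is an invariant list for the Mauldin–Williams graph `M`:
a family of nonempty compact sets `K v ⊆ T v` with
`K v = ⋃_{e ∈ E, s e = v} φ e '' K (r e)` for every vertex `v`. -/
def IsInvariantList (M : MWGraph G X) (K : V → Set X) : Prop :=
  (∀ v, K v ⊆ M.T v) ∧ (∀ v, IsCompact (K v)) ∧ (∀ v, (K v).Nonempty) ∧
    (∀ v, K v = ⋃ e ∈ {e : E | G.s e = v}, M.φ e '' K (G.r e))

/-- The Mauldin–Williams graph coincides with its own invariant list,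
i.e. `(T v)_{v ∈ V}` is itself the invariant list. -/
def SelfInvariant (M : MWGraph G X) : Prop :=
  ∀ v, M.T v = ⋃ e ∈ {e : E | G.s e = v}, M.φ e '' M.T (G.r e)

/-- The invariant set: the (disjoint) union of the sets of the family. -/
def KK (M : MWGraph G X) : Set X := ⋃ v, M.T v

/-- A Mauldin–Williams graph is totally disconnected if
`φ e '' K (r e)` and `φ g '' K (r g)` are disjoint whenever `e ≠ g`, `s e = s g`. -/
def TotallyDisconnected (M : MWGraph G X) : Prop :=
  ∀ e g : E, e ≠ g → G.s e = G.s g →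
    Disjoint (M.φ e '' M.T (G.r e)) (M.φ g '' M.T (G.r g))

end MWGraph
namespace MWGraph

variable {V E : Type*} [Fintype E] {G : DirGraph V E}

/-- An element of the bimodule `X = C(E ×_G K, ℂ)` associated with a
Mauldin–Williams graph coinciding with its invariant list, encoded as a
function `ξ : E → X → ℂ` which is continuous on `K (r e)` in the second
variable and (as a normalization) vanishes off `K (r e)`. -/
def IsElt {X : Type*} [MetricSpace X] (M : MWGraph G X) (ξ : E → X → ℂ) : Prop :=
  (∀ e, ContinuousOn (ξ e) (M.T (G.r e))) ∧ ∀ e x, x ∉ M.T (G.r e) → ξ e x = 0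

/-- The left action of `A = C(K, ℂ)`: `(a · ξ)(e, x) = a (φ e x) * ξ e x`. -/
def lAct {X : Type*} [MetricSpace X] (M : MWGraph G X) (a : X → ℂ) (ξ : E → X → ℂ) :
    E → X → ℂ :=
  fun e x => a (M.φ e x) * ξ e x

/-- The right action of `A = C(K, ℂ)`: `(ξ · a)(e, x) = ξ e x * a x`. -/
def rAct (ξ : E → X → ℂ) (a : X → ℂ) : E → X → ℂ :=
  fun e x => ξ e x * a x

/-- The `A`-valued inner product
`⟨ξ, η⟩(x) = ∑_{e ∈ E, x ∈ K (r e)} conj (ξ e x) * η e x` (thanks to the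
normalization in `IsElt`, the sum may be taken over all edges). -/
noncomputable def innerProd {X : Type*} (ξ η : E → X → ℂ) : X → ℂ :=
  fun x => ∑ e : E, (starRingEnd ℂ) (ξ e x) * η e x

/-- A correspondence isomorphism `W : X₂ → X₁` over a homeomorphism
`f : K¹ → K²`: a bijective linear map between the bimodules with
`W (a·ξ·b) = (a ∘ f) · W ξ · (b ∘ f)` and `⟨W ξ, W η⟩_{A₁} = ⟨ξ, η⟩_{A₂} ∘ f`. -/
structure CorrIso {X₁ X₂ : Type*} [MetricSpace X₁] [MetricSpace X₂]
    (M₁ : MWGraph G X₁) (M₂ : MWGraph G X₂) (f : X₁ → X₂)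
    (W : (E → X₂ → ℂ) → (E → X₁ → ℂ)) : Prop where
  maps : ∀ ξ, IsElt M₂ ξ → IsElt M₁ (W ξ)
  map_add : ∀ ξ η, IsElt M₂ ξ → IsElt M₂ η → W (ξ + η) = W ξ + W η
  map_smul : ∀ (z : ℂ) ξ, IsElt M₂ ξ → W (z • ξ) = z • W ξ
  bimodule : ∀ (a b : X₂ → ℂ) ξ, ContinuousOn a M₂.KK → ContinuousOn b M₂.KK →
    IsElt M₂ ξ → W (lAct M₂ a (rAct ξ b)) = lAct M₁ (a ∘ f) (rAct (W ξ) (b ∘ f))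
  inner_eq : ∀ ξ η, IsElt M₂ ξ → IsElt M₂ η → ∀ x ∈ M₁.KK,
    innerProd (W ξ) (W η) x = innerProd ξ η (f x)
  injective : ∀ ξ η, IsElt M₂ ξ → IsElt M₂ η → W ξ = W η → ξ = η
  surjective : ∀ η, IsElt M₁ η → ∃ ξ, IsElt M₂ ξ ∧ W ξ = η

end MWGraph

open scoped Classical

namespace MWGraph

variable {V E : Type*} [Fintype E] {G : DirGraph V E}

/-- The natural basis element `δ_g` of the bimodule `X₂`:
`δ_g (h, y) = 1` if `h = g` (and `y ∈ K (r h)`), and `0` otherwise. -/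
noncomputable def deltaElt {X₂ : Type*} [MetricSpace X₂] (M₂ : MWGraph G X₂) (g : E) :
    E → X₂ → ℂ :=
  fun h y => if h = g ∧ y ∈ M₂.T (G.r h) then 1 else 0

/-- The matrix of the correspondence isomorphism `W` with respect to the natural
bases: `w e g x = W (δ_g) (e, x)` for `x ∈ K¹ (r e)`, and `0` otherwise. -/
noncomputable def wMat {X₁ X₂ : Type*} [MetricSpace X₁] [MetricSpace X₂]
    (M₁ : MWGraph G X₁) (M₂ : MWGraph G X₂)
    (W : (E → X₂ → ℂ) → (E → X₁ → ℂ)) (e g : E) (x : X₁) : ℂ :=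
  if x ∈ M₁.T (G.r e) then W (deltaElt M₂ g) e x else 0

end MWGraph

/-- Let `W : X₂ → X₁` be a correspondence isomorphism over a
homeomorphism `f : K¹ → K²`, with matrix `w e g = W (δ_g) (e, ·)` in the natural
bases.  Then for every `x ∈ K¹` and all `e, g ∈ E` with `f x ∈ K² (r e)` and
`f x ∈ K² (r g)`, `∑_{h ∈ E, x ∈ K¹ (r h)} conj (w h g x) * w h e x` is `1` if
`e = g` and `0` otherwise; consequently there is an injective map `σ_x` from
`{e | f x ∈ K² (r e)}` into `{h | x ∈ K¹ (r h)}` with `w (σ_x e) e x ≠ 0` on its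
domain. -/
theorem MWGraph.wMat_orthonormal {V E : Type*} [Fintype V] [Fintype E]
    {X₁ X₂ : Type*} [MetricSpace X₁] [MetricSpace X₂] {G : DirGraph V E}
    (M₁ : MWGraph G X₁) (M₂ : MWGraph G X₂)
    (hM₁ : M₁.SelfInvariant) (hM₂ : M₂.SelfInvariant)
    (f : X₁ → X₂) (g' : X₂ → X₁)
    (hf : Set.MapsTo f M₁.KK M₂.KK) (hg : Set.MapsTo g' M₂.KK M₁.KK)
    (hfc : ContinuousOn f M₁.KK) (hgc : ContinuousOn g' M₂.KK)
    (hgf : ∀ x ∈ M₁.KK, g' (f x) = x) (hfg : ∀ y ∈ M₂.KK, f (g' y) = y)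
    (W : (E → X₂ → ℂ) → (E → X₁ → ℂ)) (hW : MWGraph.CorrIso M₁ M₂ f W) :
    ∀ x ∈ M₁.KK,
      (∀ e g : E, f x ∈ M₂.T (G.r e) → f x ∈ M₂.T (G.r g) →
        (∑ h ∈ Finset.univ.filter fun h : E => x ∈ M₁.T (G.r h),
            (starRingEnd ℂ) (MWGraph.wMat M₁ M₂ W h g x) * MWGraph.wMat M₁ M₂ W h e x) =
          if e = g then 1 else 0) ∧
      ∃ σ : E → E,
        Set.InjOn σ {e : E | f x ∈ M₂.T (G.r e)} ∧
        Set.MapsTo σ {e : E | f x ∈ M₂.T (G.r e)} {h : E | x ∈ M₁.T (G.r h)} ∧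
        ∀ e : E, f x ∈ M₂.T (G.r e) → MWGraph.wMat M₁ M₂ W (σ e) e x ≠ 0 := by
  intro x hx
  classical
  -- δ_g is an element of X₂
  have hdelta : ∀ g : E, IsElt M₂ (deltaElt M₂ g) := by
    intro g
    constructor
    · intro h
      apply ContinuousOn.congr (continuousOn_const (c := if h = g then (1:ℂ) else 0))
      intro y hy
      by_cases hhg : h = g
      · subst hhg; simp [deltaElt, hy]
      · simp [deltaElt, hhg]
    · intro h y hy
      simp [deltaElt, hy]
  -- the orthonormality relations
  have key : ∀ e g : E, f x ∈ M₂.T (G.r e) → f x ∈ M₂.T (G.r g) →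
      (∑ h ∈ Finset.univ.filter fun h : E => x ∈ M₁.T (G.r h),
          (starRingEnd ℂ) (wMat M₁ M₂ W h g x) * wMat M₁ M₂ W h e x) =
        if e = g then 1 else 0 := by
    intro e g he hg
    have hWg := hW.maps _ (hdelta g)
    have hWe := hW.maps _ (hdelta e)
    have h1 : (∑ h ∈ Finset.univ.filter fun h : E => x ∈ M₁.T (G.r h),
          (starRingEnd ℂ) (wMat M₁ M₂ W h g x) * wMat M₁ M₂ W h e x)
        = innerProd (W (deltaElt M₂ g)) (W (deltaElt M₂ e)) x := by
      rw [innerProd, Finset.sum_filter]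
      apply Finset.sum_congr rfl
      intro h _
      by_cases hh : x ∈ M₁.T (G.r h)
      · simp [wMat, hh]
      · simp [wMat, hh, hWg.2 h x hh]
    rw [h1, hW.inner_eq _ _ (hdelta g) (hdelta e) x hx, innerProd,
      Finset.sum_eq_single g]
    · by_cases heg : e = g <;> simp [deltaElt, hg, heg, eq_comm]
    · intro h _ hh
      simp [deltaElt, hh]
    · simp
  refine ⟨key, ?_⟩
  -- w vanishes where x ∉ K¹ (r h)
  have hw0 : ∀ h e : E, wMat M₁ M₂ W h e x ≠ 0 → x ∈ M₁.T (G.r h) := by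
    intro h e hne
    by_contra hh
    exact hne (by simp [wMat, hh])
  -- set up Hall's marriage theorem
  set t : E → Finset E := fun e =>
    if f x ∈ M₂.T (G.r e) then
      Finset.univ.filter (fun h => wMat M₁ M₂ W h e x ≠ 0)
    else Finset.univ with ht
  have hall : ∀ s : Finset E, s.card ≤ (s.biUnion t).card := by
    intro s
    by_cases hs : ∀ e ∈ s, f x ∈ M₂.T (G.r e)
    · -- linear-algebra argument: the columns of w indexed by s are orthonormal
      set u := s.biUnion t with hu
      have hsub : ∀ e ∈ s, ∀ h : E, wMat M₁ M₂ W h e x ≠ 0 → h ∈ u := by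
        intro e hes h hne
        refine Finset.mem_biUnion.2 ⟨e, hes, ?_⟩
        simp [ht, hs e hes, hne]
      set v : ↥s → EuclideanSpace ℂ ↥u := fun e => WithLp.toLp 2 (fun h : ↥u => wMat M₁ M₂ W h.1 e.1 x) with hv
      have hortho : Orthonormal ℂ v := by
        rw [orthonormal_iff_ite]
        rintro ⟨g, hgs⟩ ⟨e, hes⟩
        have hsum : (inner ℂ (v ⟨g, hgs⟩) (v ⟨e, hes⟩) : ℂ)
            = ∑ h ∈ u, (starRingEnd ℂ) (wMat M₁ M₂ W h g x) * wMat M₁ M₂ W h e x := by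
          rw [PiLp.inner_apply]
          rw [← Finset.sum_attach u
            (fun h => (starRingEnd ℂ) (wMat M₁ M₂ W h g x) * wMat M₁ M₂ W h e x)]
          simp [hv, RCLike.inner_apply, mul_comm]
        rw [hsum]
        have hfull : ∑ h ∈ u, (starRingEnd ℂ) (wMat M₁ M₂ W h g x) * wMat M₁ M₂ W h e x
            = ∑ h : E, (starRingEnd ℂ) (wMat M₁ M₂ W h g x) * wMat M₁ M₂ W h e x := by
          apply Finset.sum_subset (Finset.subset_univ u)
          intro h _ hh
          by_cases hwe : wMat M₁ M₂ W h e x = 0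
          · simp [hwe]
          · exact absurd (hsub e hes h hwe) hh
        have hfilter : ∑ h : E, (starRingEnd ℂ) (wMat M₁ M₂ W h g x) * wMat M₁ M₂ W h e x
            = ∑ h ∈ Finset.univ.filter (fun h : E => x ∈ M₁.T (G.r h)),
                (starRingEnd ℂ) (wMat M₁ M₂ W h g x) * wMat M₁ M₂ W h e x := by
          rw [Finset.sum_filter_of_ne]
          intro h _ hne
          apply hw0 h e
          intro hz
          simp [hz] at hne
        rw [hfull, hfilter, key e g (hs e hes) (hs g hgs)]
        simp [Subtype.ext_iff, eq_comm]
      have hli := hortho.linearIndependent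
      have hcard := hli.fintype_card_le_finrank
      rw [finrank_euclideanSpace] at hcard
      simpa [Fintype.card_coe] using hcard
    · -- some t e is everything
      push_neg at hs
      obtain ⟨e, hes, he⟩ := hs
      have : (Finset.univ : Finset E) ⊆ s.biUnion t := by
        intro h _
        refine Finset.mem_biUnion.2 ⟨e, hes, ?_⟩
        simp [ht, he]
      calc s.card ≤ (Finset.univ : Finset E).card := Finset.card_le_univ s
        _ ≤ (s.biUnion t).card := Finset.card_le_card this
  obtain ⟨σ, hσinj, hσmem⟩ := (Finset.all_card_le_biUnion_card_iff_exists_injective t).1 hall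
  refine ⟨σ, hσinj.injOn, ?_, ?_⟩
  · intro e he
    have he' : f x ∈ M₂.T (G.r e) := he
    have := hσmem e
    simp only [ht, he', if_true, Finset.mem_filter, Finset.mem_univ, true_and] at this
    exact hw0 _ _ this
  · intro e he
    have he' : f x ∈ M₂.T (G.r e) := he
    have := hσmem e
    simp only [ht, he', if_true, Finset.mem_filter, Finset.mem_univ, true_and] at this
    exact this
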